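/- Let p be an odd prime and n a positive integer with p^n ≠ 3. Then the girth of the unit graph G(Z_{p^n}) equals 3. -/

import Mathlib

open SimpleGraph

lemma girth_eq_three_of_triangle {α : Type*} {G : SimpleGraph α} {a b c : α}
    (hab : G.Adj a b) (hbc : G.Adj b c) (hca : G.Adj c a) : G.girth = 3 := by
  have hcyc : (Walk.cons hab (Walk.cons hbc (Walk.cons hca Walk.nil))).IsCycle := by
    simp [Walk.isCycle_def, Walk.isTrail_def, hab.ne, hbc.ne, hca.ne, hab.ne', hbc.ne', hca.ne',
      List.Nodup]
  have hle : G.egirth ≤ 3 := by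
    calc G.egirth ≤ ⨅ w : G.Walk a a, ⨅ _ : w.IsCycle, (w.length : ℕ∞) := iInf_le _ a
    _ ≤ ⨅ _ : (Walk.cons hab (Walk.cons hbc (Walk.cons hca Walk.nil))).IsCycle,
        ((Walk.cons hab (Walk.cons hbc (Walk.cons hca Walk.nil))).length : ℕ∞) := iInf_le _ _
    _ ≤ _ := iInf_le _ hcyc
  have heq : G.egirth = 3 := le_antisymm hle three_le_egirth
  simp [girth, heq]

/-- The unit graph of `ZMod m`: distinct vertices `x, y` are adjacent iff `x + y` is a unit. -/
def unitGraph (m : ℕ) : SimpleGraph (ZMod m) where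
  Adj x y := x ≠ y ∧ IsUnit (x + y)
  symm := by
    constructor
    intro x y h
    exact ⟨h.1.symm, by rw [add_comm]; exact h.2⟩
  loopless := by
    constructor
    intro x h
    exact h.1 rfl

theorem unitGraph_primePow_girth (p n : ℕ) (hp : p.Prime) (hodd : Odd p) (hn : 0 < n)
    (h3 : p ^ n ≠ 3) :
    (unitGraph (p ^ n)).girth = 3 := by
  haveI : NeZero (p ^ n) := ⟨pow_ne_zero _ hp.pos.ne'⟩
  have hunit : ∀ k : ℕ, ¬ p ∣ k → IsUnit ((k : ZMod (p ^ n))) := fun k hk =>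
    (ZMod.isUnit_iff_coprime k (p ^ n)).mpr
      (Nat.Coprime.pow_right n ((hp.coprime_iff_not_dvd.mpr hk).symm))
  have hne : ∀ a b : ℕ, a < p ^ n → b < p ^ n → a ≠ b →
      ((a : ZMod (p ^ n)) ≠ (b : ZMod (p ^ n))) := by
    intro a b ha hb hab hc
    apply hab
    have := ZMod.val_cast_of_lt ha
    have := ZMod.val_cast_of_lt hb
    rw [← ZMod.val_cast_of_lt ha, ← ZMod.val_cast_of_lt hb, hc]
  have hp2 : p ≠ 2 := by rintro rfl; simp [Nat.odd_iff] at hodd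
  by_cases hp3 : p = 3
  · subst hp3
    have hn2 : 2 ≤ n := by
      rcases Nat.lt_or_ge n 2 with h | h
      · interval_cases n <;> simp_all
      · exact h
    have h9 : 9 ≤ 3 ^ n := by
      calc (9 : ℕ) = 3 ^ 2 := by norm_num
      _ ≤ 3 ^ n := Nat.pow_le_pow_right (by norm_num) hn2
    apply girth_eq_three_of_triangle (a := ((0 : ℕ) : ZMod (3 ^ n)))
      (b := ((1 : ℕ) : ZMod (3 ^ n))) (c := ((4 : ℕ) : ZMod (3 ^ n)))
    · exact ⟨hne 0 1 (by omega) (by omega) (by norm_num),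
        by rw [← Nat.cast_add]; exact hunit _ (by norm_num)⟩
    · exact ⟨hne 1 4 (by omega) (by omega) (by norm_num),
        by rw [← Nat.cast_add]; exact hunit _ (by norm_num)⟩
    · exact ⟨hne 4 0 (by omega) (by omega) (by norm_num),
        by rw [← Nat.cast_add]; exact hunit _ (by norm_num)⟩
  · have hp4 : p ≠ 4 := by rintro rfl; norm_num at hp
    have hp5 : 5 ≤ p := by have := hp.two_le; omega
    have h5 : 5 ≤ p ^ n := le_trans hp5 (Nat.le_self_pow hn.ne' p)
    have hd1 : ¬ p ∣ 1 := fun h => hp.one_lt.ne' (Nat.dvd_one.mp h)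
    have hnd : ∀ k : ℕ, k < 5 → 0 < k → ¬ p ∣ k := by
      intro k hk5 hk0 hd
      have := Nat.le_of_dvd hk0 hd
      omega
    apply girth_eq_three_of_triangle (a := ((0 : ℕ) : ZMod (p ^ n)))
      (b := ((1 : ℕ) : ZMod (p ^ n))) (c := ((2 : ℕ) : ZMod (p ^ n)))
    · exact ⟨hne 0 1 (by omega) (by omega) (by norm_num),
        by rw [← Nat.cast_add]; exact hunit _ (hnd 1 (by norm_num) (by norm_num))⟩
    · exact ⟨hne 1 2 (by omega) (by omega) (by norm_num),
        by rw [← Nat.cast_add]; exact hunit _ (hnd 3 (by norm_num) (by norm_num))⟩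
    · exact ⟨hne 2 0 (by omega) (by omega) (by norm_num),
        by rw [← Nat.cast_add]; exact hunit _ (hnd 2 (by norm_num) (by norm_num))⟩
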